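/- Let 0 ≤ a_1 < a_2 < ⋯ < a_n and 0 ≤ b_1 < b_2 < ⋯ < b_n be two strictly increasing sequences of nonnegative integers with a_i ≥ b_i for each i ∈ [n]. Then the n×n matrix M with entries M_{i,j} = C(a_i, b_j) (binomial coefficient) has strictly positive determinant: det(M) > 0. -/

import Mathlib

open Matrix Finset in
private lemma hockey (c : ℕ) {A' A : ℕ} (h : A' ≤ A) :
    (∑ t ∈ Finset.Ico A' A, ((t.choose c : ℤ))) = (A.choose (c+1) : ℤ) - (A'.choose (c+1) : ℤ) := by
  induction A, h using Nat.le_induction with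
  | base => simp
  | succ A hA ih =>
      rw [Finset.sum_Ico_succ_top hA, ih]
      have h2 : (A+1).choose (c+1) = A.choose c + A.choose (c+1) := Nat.choose_succ_succ A c
      push_cast [h2]; ring

open Matrix Finset in
private lemma det_choose_eq_zero {n : ℕ} (a b : Fin n → ℕ) (ha : Monotone a) (hb : Monotone b)
    (k : Fin n) (hk : a k < b k) :
    (Matrix.of fun i j : Fin n => ((a i).choose (b j) : ℤ)).det = 0 := by
  rw [Matrix.det_apply]
  apply Finset.sum_eq_zero
  intro σ _
  have hex : ∃ j, k ≤ j ∧ σ j ≤ k := by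
    by_contra h
    push_neg at h
    have hmaps : ∀ j ∈ Finset.Ici k, σ j ∈ Finset.Ioi k := by
      intro j hj
      simp only [Finset.mem_Ici] at hj
      simpa using h j hj
    have hcard := Finset.card_le_card_of_injOn σ hmaps σ.injective.injOn
    rw [Fin.card_Ici, Fin.card_Ioi] at hcard
    have := k.isLt
    omega
  obtain ⟨j, hkj, hjk⟩ := hex
  have hzero : ((a (σ j)).choose (b j) : ℤ) = 0 := by
    have h1 : a (σ j) ≤ a k := ha hjk
    have h2 : b k ≤ b j := hb hkj
    rw [Nat.choose_eq_zero_of_lt (by omega)]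
    simp
  rw [Finset.prod_eq_zero (Finset.mem_univ j) (by simpa using hzero), smul_zero]

open Matrix Finset in
private lemma main_aux : ∀ m n : ℕ, ∀ a b : Fin n → ℕ, n + ∑ j, b j ≤ m →
    StrictMono a → StrictMono b → (∀ i, b i ≤ a i) →
    0 < (Matrix.of fun i j : Fin n => ((a i).choose (b j) : ℤ)).det := by
  intro m
  induction m using Nat.strong_induction_on with
  | _ m IH =>
    intro n a b hm ha hb hab
    match n, a, b, hm, ha, hb, hab with
    | 0, a, b, _, _, _, _ => simp
    | (p+1), a, b, hm, ha, hb, hab =>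
      by_cases hb0 : b 0 = 0
      · set M : Matrix (Fin (p+1)) (Fin (p+1)) ℤ := Matrix.of (fun i j => ((a i).choose (b j) : ℤ)) with hM
        set L : Matrix (Fin (p+1)) (Fin (p+1)) ℤ := Matrix.of (fun i k =>
          Fin.cases (if k = 0 then (1:ℤ) else 0)
            (fun i' => if k = i'.succ then (1:ℤ) else if k = i'.castSucc then -1 else 0) i) with hL
        have hL0 : ∀ k, L 0 k = if k = 0 then (1:ℤ) else 0 := fun k => by simp [hL]
        have hLs : ∀ (i' : Fin p) (k : Fin (p+1)),
            L i'.succ k = if k = i'.succ then (1:ℤ) else if k = i'.castSucc then -1 else 0 :=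
          fun i' k => by simp [hL]
        have hLdet : L.det = 1 := by
          rw [Matrix.det_of_lowerTriangular L ?ht]
          case ht =>
            intro i j hij
            replace hij : i < j := hij
            induction i using Fin.cases with
            | zero =>
                rw [hL0, if_neg (by rintro rfl; exact absurd hij (lt_irrefl _))]
            | succ i' =>
                have h1 : j ≠ i'.succ := by rintro rfl; exact absurd hij (lt_irrefl _)
                have h2 : j ≠ i'.castSucc := by
                  rintro rfl
                  exact absurd ((Fin.castSucc_lt_succ (i := i')).trans hij) (lt_irrefl _)
                rw [hLs, if_neg h1, if_neg h2]
          · apply Finset.prod_eq_one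
            intro i _
            induction i using Fin.cases with
            | zero => rw [hL0, if_pos rfl]
            | succ i' => rw [hLs, if_pos rfl]
        have hN0 : ∀ j, (L * M) 0 j = M 0 j := by
          intro j
          rw [Matrix.mul_apply, Finset.sum_eq_single 0]
          · rw [hL0, if_pos rfl, one_mul]
          · intro k _ hk; rw [hL0, if_neg hk, zero_mul]
          · intro h; exact absurd (Finset.mem_univ _) h
        have hNs : ∀ (i' : Fin p) (j : Fin (p+1)),
            (L * M) i'.succ j = M i'.succ j - M i'.castSucc j := by
          intro i' j
          have hne : i'.succ ≠ i'.castSucc := (Fin.castSucc_lt_succ (i := i')).ne'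
          rw [Matrix.mul_apply,
            Finset.sum_eq_add_of_mem i'.succ i'.castSucc (Finset.mem_univ _) (Finset.mem_univ _) hne
              (by
                intro c _ hc
                rw [hLs, if_neg hc.1, if_neg hc.2, zero_mul]),
            hLs, hLs, if_pos rfl, if_neg hne.symm, if_pos rfl]
          ring
        have hdetLM : M.det = (L * M).det := by
          rw [Matrix.det_mul, hLdet, one_mul]
        have hbs : ∀ j : Fin p, 1 ≤ b j.succ := by
          intro j
          have := hb (Fin.succ_pos j)
          omega
        set c : Fin p → ℕ := fun j => b j.succ - 1 with hc
        set s : Fin p → Finset ℕ := fun i => Finset.Ico (a i.castSucc) (a i.succ) with hs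
        clear_value M L c s
        have hsub : (L * M).submatrix (Fin.succAbove 0) Fin.succ =
            Matrix.of (fun i j => ∑ t ∈ s i, ((t.choose (c j)) : ℤ)) := by
          ext i j
          rw [Matrix.submatrix_apply, Fin.zero_succAbove, hNs, Matrix.of_apply]
          simp only [hs, hc]
          rw [hockey (b j.succ - 1) (ha.monotone (Fin.castSucc_lt_succ (i := i)).le)]
          have hb1 : b j.succ - 1 + 1 = b j.succ := by
            have := hbs j; clear * - this; omega
          rw [hb1, hM]
          rfl
        -- multilinearity
        have hml : (Matrix.of (fun i j => ∑ t ∈ s i, ((t.choose (c j)) : ℤ))).det =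
            ∑ r ∈ Fintype.piFinset s,
              (Matrix.of (fun i j : Fin p => (((r i).choose (c j)) : ℤ))).det := by
          have h1 : (Matrix.of (fun i j => ∑ t ∈ s i, ((t.choose (c j)) : ℤ))) =
              Matrix.of (fun i => ∑ t ∈ s i, (fun j => ((t.choose (c j)) : ℤ))) := by
            ext i j
            simp [Finset.sum_apply]
          rw [h1]
          exact Matrix.detRowAlternating.toMultilinearMap.map_sum_finset
            (fun _ t => fun j => ((t.choose (c j)) : ℤ)) s
        have hcs : StrictMono c := by
          intro i i' h
          have h1 := hb (Fin.succ_lt_succ_iff.mpr h)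
          have h2 := hbs i
          simp only [hc]
          clear * - h1 h2
          omega
        have hmeasure : p + ∑ j, c j < m := by
          have h1 : ∑ j : Fin p, c j ≤ ∑ j : Fin p, b j.succ :=
            Finset.sum_le_sum (fun j _ => by simp only [hc]; exact Nat.sub_le _ _)
          have h2 : ∑ j : Fin (p+1), b j = b 0 + ∑ j : Fin p, b j.succ := Fin.sum_univ_succ b
          clear * - h1 h2 hm
          omega
        have hrmono : ∀ r ∈ Fintype.piFinset s, StrictMono r := by
          intro r hr
          rw [Fintype.mem_piFinset] at hr
          intro i i' h
          have h1 := hr i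
          have h2 := hr i'
          simp only [hs, Finset.mem_Ico] at h1 h2
          have h3 : a i.succ ≤ a i'.castSucc := by
            apply ha.monotone
            rw [Fin.le_def]
            simp only [Fin.val_succ, Fin.coe_castSucc]
            exact h
          clear * - h1 h2 h3
          omega
        have hterm_nonneg : ∀ r ∈ Fintype.piFinset s,
            0 ≤ (Matrix.of (fun i j : Fin p => (((r i).choose (c j)) : ℤ))).det := by
          intro r hr
          by_cases hdom : ∀ i, c i ≤ r i
          · exact le_of_lt (IH _ hmeasure p r c le_rfl (hrmono r hr) hcs hdom)
          · push_neg at hdom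
            obtain ⟨k, hk⟩ := hdom
            rw [det_choose_eq_zero r c (hrmono r hr).monotone hcs.monotone k hk]
        have hwitness : ∃ r ∈ Fintype.piFinset s,
            0 < (Matrix.of (fun i j : Fin p => (((r i).choose (c j)) : ℤ))).det := by
          refine ⟨fun i => a i.succ - 1, ?_, ?_⟩
          · rw [Fintype.mem_piFinset]
            intro i
            have h1 := ha (Fin.castSucc_lt_succ (i := i))
            simp only [hs, Finset.mem_Ico]
            clear * - h1
            omega
          · have hr : StrictMono (fun i : Fin p => a i.succ - 1) := by
              intro i i' h
              have h1 := ha (Fin.succ_lt_succ_iff.mpr h)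
              have h2 : a 0 < a i.succ := ha (Fin.succ_pos i)
              show a i.succ - 1 < a i'.succ - 1
              clear * - h1 h2
              omega
            have hdom : ∀ i : Fin p, c i ≤ a i.succ - 1 := by
              intro i
              have h1 := hab i.succ
              simp only [hc]
              clear * - h1
              omega
            exact IH _ hmeasure p _ c le_rfl hr hcs hdom
        have hfinal : 0 < ((L * M).submatrix (Fin.succAbove 0) Fin.succ).det := by
          rw [hsub, hml]
          exact Finset.sum_pos' hterm_nonneg hwitness
        -- expansion along column 0
        have hM00 : (L * M) 0 0 = 1 := by
          rw [hN0, hM]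
          simp [hb0]
        have hMi0 : ∀ i' : Fin p, (L * M) i'.succ 0 = 0 := by
          intro i'
          rw [hNs, hM]
          simp [hb0]
        rw [hdetLM, Matrix.det_succ_column_zero, Finset.sum_eq_single 0]
        · rw [hM00]
          simpa using hfinal
        · intro i _ hi
          induction i using Fin.cases with
          | zero => exact absurd rfl hi
          | succ i' => rw [hMi0, mul_zero, zero_mul]
        · intro h; exact absurd (Finset.mem_univ _) h
      · -- scaling case: all b j ≥ 1, all a i ≥ 1
        have hb1 : ∀ j, 1 ≤ b j := by
          intro j
          have : b 0 ≤ b j := hb.monotone (Fin.zero_le j)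
          omega
        have ha1 : ∀ i, 1 ≤ a i := fun i => le_trans (hb1 i) (hab i)
        set a' : Fin (p+1) → ℕ := fun i => a i - 1 with ha'
        set b' : Fin (p+1) → ℕ := fun j => b j - 1 with hb'
        have ha's : StrictMono a' := by
          intro i j hij
          have := ha hij; have := ha1 i; simp only [ha']; omega
        have hb's : StrictMono b' := by
          intro i j hij
          have := hb hij; have := hb1 i; simp only [hb']; omega
        have hab' : ∀ i, b' i ≤ a' i := by
          intro i; have := hab i; simp only [ha', hb']; omega
        have hmeas : (p+1) + ∑ j, b' j < m := by
          have hs : ∑ j, b' j + (∑ _j : Fin (p+1), 1) ≤ ∑ j, b j := by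
            rw [← Finset.sum_add_distrib]
            apply Finset.sum_le_sum
            intro j _; have := hb1 j; simp only [hb']; omega
          simp only [Finset.sum_const, Finset.card_univ, Fintype.card_fin, smul_eq_mul, mul_one] at hs
          omega
        have hN : 0 < (Matrix.of fun i j : Fin (p+1) => ((a' i).choose (b' j) : ℤ)).det :=
          IH _ hmeas (p+1) a' b' le_rfl ha's hb's hab'
        -- work over ℚ
        have cast_det : ∀ (M : Matrix (Fin (p+1)) (Fin (p+1)) ℤ),
            (M.det : ℚ) = (M.map (Int.cast : ℤ → ℚ)).det := by
          intro M
          have h := RingHom.map_det (Int.castRingHom ℚ) M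
          simpa using h
        have key : ((Matrix.of fun i j : Fin (p+1) => ((a i).choose (b j) : ℤ)).det : ℚ) =
            (∏ i, (a i : ℚ)) * ((Matrix.of fun i j : Fin (p+1) => ((a' i).choose (b' j) : ℤ)).det : ℚ)
              * ∏ j, ((b j : ℚ))⁻¹ := by
          rw [cast_det, cast_det]
          have hfact : (Matrix.of fun i j : Fin (p+1) => ((a i).choose (b j) : ℤ)).map (Int.cast : ℤ → ℚ) =
              Matrix.diagonal (fun i => (a i : ℚ)) *
                ((Matrix.of fun i j : Fin (p+1) => ((a' i).choose (b' j) : ℤ)).map (Int.cast : ℤ → ℚ)) *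
                Matrix.diagonal (fun j => ((b j : ℚ))⁻¹) := by
            ext i j
            rw [Matrix.mul_diagonal, Matrix.diagonal_mul]
            simp only [Matrix.map_apply, Matrix.of_apply, Int.cast_natCast]
            have hident : (a i).choose (b j) * b j = a i * ((a' i).choose (b' j)) := by
              have h := Nat.add_one_mul_choose_eq (a i - 1) (b j - 1)
              have h1 := ha1 i; have h2 := hb1 j
              rw [show a i - 1 + 1 = a i by omega, show b j - 1 + 1 = b j by omega] at h
              simp only [ha', hb']
              exact h.symm
            have hbj : ((b j : ℚ)) ≠ 0 := by
              have := hb1 j; positivity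
            field_simp
            exact_mod_cast hident
          rw [hfact, Matrix.det_mul, Matrix.det_mul, Matrix.det_diagonal, Matrix.det_diagonal]
        have hpos : (0:ℚ) < ((Matrix.of fun i j : Fin (p+1) => ((a i).choose (b j) : ℤ)).det : ℚ) := by
          rw [key]
          apply mul_pos (mul_pos _ _)
          · apply Finset.prod_pos; intro j _; have := hb1 j; positivity
          · apply Finset.prod_pos; intro i _; have := ha1 i
            exact_mod_cast Nat.pos_of_ne_zero (by omega)
          · exact_mod_cast hN
        exact_mod_cast hpos

/-- **Gessel–Viennot (Corollary 2).** If `0 ≤ a₁ < a₂ < ⋯ < a_n` and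
`0 ≤ b₁ < b₂ < ⋯ < b_n` are nonnegative integers with `a_i ≥ b_i` for every `i`,
then the matrix `M` with `M_{i,j} = C(a_i, b_j)` has strictly positive determinant. -/
theorem gessel_viennot_binomial_det_pos {n : ℕ} (a b : Fin n → ℕ)
    (ha : StrictMono a) (hb : StrictMono b) (hab : ∀ i : Fin n, b i ≤ a i) :
    0 < (Matrix.of fun i j : Fin n => ((a i).choose (b j) : ℤ)).det :=
  main_aux (n + ∑ j, b j) n a b le_rfl ha hb hab
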